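/- Let B > 0. For all ξ, x in [0,B], ∫₀^B max(ξ−u,0)·max(x−u,0) du = ξ·x·min(ξ,x) − (ξ+x)·min(ξ,x)²/2 + min(ξ,x)³/3. Consequently the composition γ*γ of the restricted call operator followed by the restricted put operator is the integral operator on [0,B] with the symmetric kernel ϑ₁(ξ,x) = ξx(ξ∧x) − (ξ+x)(ξ∧x)²/2 + (ξ∧x)³/3. -/

import Mathlib

open MeasureTheory Set

lemma kernel_eq (B : ℝ) (hB : 0 < B) {ξ x : ℝ} (hξ : ξ ∈ Icc (0:ℝ) B)
    (hx : x ∈ Icc (0:ℝ) B) :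
    (∫ u in (0:ℝ)..B, max (ξ - u) 0 * max (x - u) 0)
      = ξ * x * min ξ x - (ξ + x) * (min ξ x) ^ 2 / 2 + (min ξ x) ^ 3 / 3 := by
  set m := min ξ x with hm
  have hm0 : 0 ≤ m := le_min hξ.1 hx.1
  have hmB : m ≤ B := min_le_of_left_le hξ.2
  have hmξ : m ≤ ξ := min_le_left _ _
  have hmx : m ≤ x := min_le_right _ _
  have hcont : Continuous (fun u : ℝ => max (ξ - u) 0 * max (x - u) 0) := by fun_prop
  have hsplit : (∫ u in (0:ℝ)..B, max (ξ - u) 0 * max (x - u) 0)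
      = (∫ u in (0:ℝ)..m, max (ξ - u) 0 * max (x - u) 0)
        + ∫ u in m..B, max (ξ - u) 0 * max (x - u) 0 :=
    (intervalIntegral.integral_add_adjacent_intervals
      (hcont.intervalIntegrable _ _) (hcont.intervalIntegrable _ _)).symm
  have h2 : (∫ u in m..B, max (ξ - u) 0 * max (x - u) 0) = 0 := by
    rw [intervalIntegral.integral_congr (g := fun _ => (0:ℝ))]
    · simp
    · intro u hu
      rw [uIcc_of_le hmB] at hu
      rcases le_total ξ x with h | h
      · have hmm : ξ ≤ u := by have : m = ξ := min_eq_left h; linarith [hu.1, this.symm.trans_le hu.1]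
        have h0 : ξ - u ≤ 0 := by linarith
        simp [max_eq_right h0]
      · have hmm : x ≤ u := by have : m = x := min_eq_right h; linarith [this.symm.trans_le hu.1]
        have h0 : x - u ≤ 0 := by linarith
        simp [max_eq_right h0]
  have h1 : (∫ u in (0:ℝ)..m, max (ξ - u) 0 * max (x - u) 0)
      = ∫ u in (0:ℝ)..m, (ξ * x - (ξ + x) * u + u ^ 2) := by
    apply intervalIntegral.integral_congr
    intro u hu
    rw [uIcc_of_le hm0] at hu
    have h1' : 0 ≤ ξ - u := by linarith [hu.2]
    have h2' : 0 ≤ x - u := by linarith [hu.2]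
    simp only [max_eq_left h1', max_eq_left h2']
    ring
  rw [hsplit, h2, h1, add_zero]
  rw [intervalIntegral.integral_add
      ((Continuous.intervalIntegrable (by fun_prop) _ _))
      ((Continuous.intervalIntegrable (by fun_prop) _ _)),
    intervalIntegral.integral_sub
      ((Continuous.intervalIntegrable (by fun_prop) _ _))
      ((Continuous.intervalIntegrable (by fun_prop) _ _)),
    intervalIntegral.integral_const, intervalIntegral.integral_const_mul,
    integral_id, integral_pow]
  simp only [smul_eq_mul]
  ring

/-- For all `ξ, x ∈ [0,B]`,
`∫₀^B max(ξ−u,0) max(x−u,0) du = ξ x min(ξ,x) − (ξ+x) min(ξ,x)²/2 + min(ξ,x)³/3`.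
Consequently `γ*γ` is the integral operator on `[0,B]` with the symmetric kernel
`ϑ₁(ξ,x) = ξx(ξ∧x) − (ξ+x)(ξ∧x)²/2 + (ξ∧x)³/3`. -/
theorem stmt_2 (B : ℝ) (hB : 0 < B) :
    (∀ ξ ∈ Icc (0:ℝ) B, ∀ x ∈ Icc (0:ℝ) B,
      (∫ u in (0:ℝ)..B, max (ξ - u) 0 * max (x - u) 0)
        = ξ * x * min ξ x - (ξ + x) * (min ξ x) ^ 2 / 2 + (min ξ x) ^ 3 / 3) ∧
    (∀ f : ℝ → ℝ, MemLp f 2 (volume.restrict (Icc (0:ℝ) B)) →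
      ∀ ξ ∈ Icc (0:ℝ) B,
        (∫ u in (0:ℝ)..B, max (ξ - u) 0 * ∫ x in (0:ℝ)..B, max (x - u) 0 * f x)
          = ∫ x in (0:ℝ)..B,
              (ξ * x * min ξ x - (ξ + x) * (min ξ x) ^ 2 / 2 + (min ξ x) ^ 3 / 3) * f x) := by
  constructor
  · intro ξ hξ x hx
    exact kernel_eq B hB hξ hx
  · intro f hf ξ hξ
    set μ := volume.restrict (Ioc (0:ℝ) B) with hμ
    have hfi : Integrable f μ := by
      have : Integrable f (volume.restrict (Icc (0:ℝ) B)) :=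
        hf.integrable (by norm_num)
      exact this.mono_measure (Measure.restrict_mono Ioc_subset_Icc_self le_rfl)
    -- integrability of the two-variable function
    have hFmeas : AEStronglyMeasurable
        (fun z : ℝ × ℝ => max (ξ - z.1) 0 * (max (z.2 - z.1) 0 * f z.2)) (μ.prod μ) := by
      have h1 : AEStronglyMeasurable
          (fun z : ℝ × ℝ => max (ξ - z.1) 0 * max (z.2 - z.1) 0) (μ.prod μ) :=
        (Continuous.aestronglyMeasurable (by fun_prop))
      have h2 : AEStronglyMeasurable (fun z : ℝ × ℝ => f z.2) (μ.prod μ) :=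
        hfi.aestronglyMeasurable.comp_snd
      exact (h1.mul h2).congr (Filter.Eventually.of_forall fun z => by simp [mul_assoc])
    have hbound : Integrable (fun z : ℝ × ℝ => B * B * |f z.2|) (μ.prod μ) := by
      have : Integrable (fun z : ℝ × ℝ => (fun _ : ℝ => B * B) z.1 * |f z.2|) (μ.prod μ) :=
        Integrable.mul_prod (integrable_const _) hfi.abs
      simpa using this
    have hFint : Integrable
        (fun z : ℝ × ℝ => max (ξ - z.1) 0 * (max (z.2 - z.1) 0 * f z.2)) (μ.prod μ) := by
      refine hbound.mono' hFmeas ?_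
      have hprod : μ.prod μ = (volume.prod volume).restrict (Ioc (0:ℝ) B ×ˢ Ioc (0:ℝ) B) := by
        rw [hμ, Measure.prod_restrict]
      rw [hprod]
      refine (ae_restrict_iff' (measurableSet_Ioc.prod measurableSet_Ioc)).2 ?_
      filter_upwards with z hz
      obtain ⟨hz1, hz2⟩ := hz
      have hu0 : 0 < z.1 := hz1.1
      have hxB : z.2 ≤ B := hz2.2
      have e1 : |max (ξ - z.1) 0| ≤ B := by
        rw [abs_of_nonneg (le_max_right _ _)]
        have := hξ.2
        rcases le_total (ξ - z.1) 0 with h | h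
        · rw [max_eq_right h]; linarith
        · rw [max_eq_left h]; linarith
      have e2 : |max (z.2 - z.1) 0| ≤ B := by
        rw [abs_of_nonneg (le_max_right _ _)]
        rcases le_total (z.2 - z.1) 0 with h | h
        · rw [max_eq_right h]; linarith
        · rw [max_eq_left h]; linarith
      calc ‖max (ξ - z.1) 0 * (max (z.2 - z.1) 0 * f z.2)‖
          = |max (ξ - z.1) 0| * (|max (z.2 - z.1) 0| * |f z.2|) := by
            simp [Real.norm_eq_abs, abs_mul]
        _ ≤ B * (B * |f z.2|) :=
            mul_le_mul e1 (mul_le_mul_of_nonneg_right e2 (abs_nonneg _))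
              (mul_nonneg (abs_nonneg _) (abs_nonneg _)) hB.le
        _ = B * B * |f z.2| := by ring
    -- rewrite interval integrals as set integrals over Ioc
    have hIoc : ∀ g : ℝ → ℝ, (∫ u in (0:ℝ)..B, g u) = ∫ u, g u ∂μ := fun g =>
      intervalIntegral.integral_of_le hB.le
    rw [hIoc]
    have step1 : (∫ u, max (ξ - u) 0 * (∫ x in (0:ℝ)..B, max (x - u) 0 * f x) ∂μ)
        = ∫ u, ∫ x, max (ξ - u) 0 * (max (x - u) 0 * f x) ∂μ ∂μ := by
      refine integral_congr_ae (Filter.Eventually.of_forall fun u => ?_)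
      show max (ξ - u) 0 * (∫ x in (0:ℝ)..B, max (x - u) 0 * f x)
          = ∫ x, max (ξ - u) 0 * (max (x - u) 0 * f x) ∂μ
      rw [hIoc, integral_const_mul]
    rw [step1, integral_integral_swap hFint, hIoc]
    refine integral_congr_ae ?_
    rw [hμ]
    refine (ae_restrict_iff' measurableSet_Ioc).2 ?_
    filter_upwards with x hx
    have hx' : x ∈ Icc (0:ℝ) B := Ioc_subset_Icc_self hx
    have : (∫ u, max (ξ - u) 0 * (max (x - u) 0 * f x) ∂μ)
        = (∫ u, max (ξ - u) 0 * max (x - u) 0 ∂μ) * f x := by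
      simp_rw [← mul_assoc]
      exact integral_mul_const _ _
    rw [this, ← hIoc, kernel_eq B hB hξ hx']
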